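/- For all real z > 0, 1 − (1 + Σ_{q=1}^{2} Π_{r=1}^{q} z/(r + (3/4)·z/(1 − e^{−z})))^{−1} ≥ (4/7)·(1 − e^{−z}). -/

import Mathlib

open Finset

private lemma log_lower (z : ℝ) (hz : 0 ≤ z) :
    (1 - Real.exp (-z)) + (1 - Real.exp (-z))^2/2 + (1 - Real.exp (-z))^3/3
      + (1 - Real.exp (-z))^4/4 + (1 - Real.exp (-z))^5/5 ≤ z := by
  set F : ℝ → ℝ := fun x => x - ((1 - Real.exp (-x)) + (1 - Real.exp (-x))^2/2
      + (1 - Real.exp (-x))^3/3 + (1 - Real.exp (-x))^4/4 + (1 - Real.exp (-x))^5/5) with hF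
  have hderiv : ∀ x : ℝ, HasDerivAt F ((1 - Real.exp (-x))^5) x := by
    intro x
    have he : HasDerivAt (fun x : ℝ => 1 - Real.exp (-x)) (Real.exp (-x)) x := by
      have h1 : HasDerivAt (fun x : ℝ => Real.exp (-x)) (Real.exp (-x) * (-1)) x :=
        (Real.hasDerivAt_exp (-x)).comp x (hasDerivAt_neg x)
      have h := (hasDerivAt_const x (1:ℝ)).sub h1
      simp only [mul_neg, mul_one, zero_sub, neg_neg] at h
      exact h
    have h2 := he.pow 2
    have h3 := he.pow 3
    have h4 := he.pow 4
    have h5 := he.pow 5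
    have := ((hasDerivAt_id x).sub ((((he.add (h2.div_const 2)).add
      (h3.div_const 3)).add (h4.div_const 4)).add (h5.div_const 5)))
    exact this.congr_deriv (by ring)
  have hmono : MonotoneOn F (Set.Ici (0:ℝ)) := by
    apply monotoneOn_of_deriv_nonneg (convex_Ici 0)
    · exact fun x _ => (hderiv x).continuousAt.continuousWithinAt
    · exact fun x _ => (hderiv x).differentiableAt.differentiableWithinAt
    · intro x hx
      rw [(hderiv x).deriv]
      have hx' : Real.exp (-x) ≤ 1 := by
        rw [Real.exp_le_one_iff]
        simp only [Set.nonempty_Iio, interior_Ici'] at hx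
        linarith [Set.mem_Ioi.mp hx]
      exact pow_nonneg (by linarith) 5
  have h0 : F 0 = 0 := by simp [hF]
  have := hmono (Set.self_mem_Ici) (Set.mem_Ici.2 hz) hz
  rw [h0] at this
  simp only [hF] at this
  linarith

private lemma poly_key (z u : ℝ) (hz : 0 < z) (hu0 : 0 < u) (hu1 : u < 1)
    (hP : u + u^2/2 + u^3/3 + u^4/4 + u^5/5 ≤ z) :
    (4*u+3*z)*(8*u+3*z) ≤ (7-4*u)*(8*z*u + 3*z^2 + 4*z^2*u) := by
  set P : ℝ := u + u^2/2 + u^3/3 + u^4/4 + u^5/5 with hPdef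
  have hPu : u ≤ P := by
    rw [hPdef]
    nlinarith [sq_nonneg u, pow_pos hu0 3, pow_pos hu0 4, pow_pos hu0 5]
  have hP0 : 0 < P := lt_of_lt_of_le hu0 hPu
  -- q3 Bernstein positivity : f(P,u) = u^3 * q3(u) ≥ 0
  have hq3 : 0 ≤ (3:ℝ)/2 + 5/12*u + 3/4*u^2 + 19/20*u^3 - 71/90*u^4 - 713/720*u^5
      - 23/60*u^6 - 79/300*u^7 - 6/25*u^8 - 4/25*u^9 := by
    have hid : (3:ℝ)/2 + 5/12*u + 3/4*u^2 + 19/20*u^3 - 71/90*u^4 - 713/720*u^5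
        - 23/60*u^6 - 79/300*u^7 - 6/25*u^8 - 4/25*u^9
      = 3/2*(1-u)^9 + 167/12*u*(1-u)^8 + 697/12*u^2*(1-u)^7 + 2158/15*u^3*(1-u)^6
        + 41939/180*u^4*(1-u)^5 + 182687/720*u^5*(1-u)^4 + 3647/20*u^6*(1-u)^3
        + 144761/1800*u^7*(1-u)^2 + 3233/180*u^8*(1-u) + 949/1200*u^9 := by ring
    rw [hid]
    have h1u : (0:ℝ) ≤ 1 - u := by linarith
    have hu : (0:ℝ) ≤ u := hu0.le
    positivity
  have hfP : 0 ≤ (3+4*u-4*u^2)*P^2 + (5*u-8*u^2)*P - 8*u^2 := by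
    have hid : (3+4*u-4*u^2)*P^2 + (5*u-8*u^2)*P - 8*u^2
        = u^3 * ((3:ℝ)/2 + 5/12*u + 3/4*u^2 + 19/20*u^3 - 71/90*u^4 - 713/720*u^5
          - 23/60*u^6 - 79/300*u^7 - 6/25*u^8 - 4/25*u^9) := by
      rw [hPdef]; ring
    rw [hid]
    exact mul_nonneg (by positivity) hq3
  -- monotonicity in z
  have hfac : 0 ≤ (3+4*u-4*u^2)*(z+P) + (5*u-8*u^2) := by
    nlinarith [mul_nonneg hu0.le (sub_nonneg.2 hu1.le), mul_pos hz hu0]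
  have hstep : 0 ≤ (z - P) * ((3+4*u-4*u^2)*(z+P) + (5*u-8*u^2)) :=
    mul_nonneg (sub_nonneg.2 hP) hfac
  nlinarith [hfP, hstep]

/-- Availability lower bound used in the 15/56-competitive multi-good analysis. -/
theorem stmt_2 (z : ℝ) (hz : 0 < z) :
    1 - (1 + ∑ q ∈ Finset.Icc (1:ℕ) 2, ∏ r ∈ Finset.Icc 1 q,
        z / ((r : ℝ) + (3 / 4) * z / (1 - Real.exp (-z))))⁻¹
      ≥ (4 / 7) * (1 - Real.exp (-z)) := by
  set u : ℝ := 1 - Real.exp (-z) with hu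
  have hexp : Real.exp (-z) < 1 := by
    rw [Real.exp_lt_one_iff]; linarith
  have hu0 : 0 < u := by simp [hu]; linarith
  have hu1 : u < 1 := by
    have := Real.exp_pos (-z); simp [hu]; linarith
  have hP := log_lower z hz.le
  have key := poly_key z u hz hu0 hu1 (by rw [hu]; linarith [hP])
  -- evaluate the sum
  have hsum : ∑ q ∈ Finset.Icc (1:ℕ) 2, ∏ r ∈ Finset.Icc 1 q,
      z / ((r : ℝ) + (3 / 4) * z / u)
      = z / (1 + 3/4*z/u) + z / (1 + 3/4*z/u) * (z / (2 + 3/4*z/u)) := by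
    rw [show Finset.Icc (1:ℕ) 2 = {1, 2} from rfl]
    rw [Finset.sum_insert (by decide), Finset.sum_singleton]
    rw [show Finset.Icc (1:ℕ) 1 = {1} from rfl, Finset.prod_singleton]
    rw [show Finset.Icc (1:ℕ) 2 = {1, 2} from rfl]
    rw [Finset.prod_insert (by decide), Finset.prod_singleton]
    push_cast
    ring
  rw [hsum]
  set D1 : ℝ := 1 + 3/4*z/u with hD1
  set D2 : ℝ := 2 + 3/4*z/u with hD2
  have hd : 0 < 3/4*z/u := by positivity
  have hD1p : 0 < D1 := by rw [hD1]; linarith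
  have hD2p : 0 < D2 := by rw [hD2]; linarith
  set S : ℝ := z / D1 + z / D1 * (z / D2) with hS
  have hSpos : 0 < S := by
    rw [hS]; positivity
  have hT : 0 < 1 + S := by linarith
  rw [ge_iff_le, ← sub_nonneg]
  have hrw : 1 - (1 + S)⁻¹ - 4/7*u = (S - 4/7*u*(1+S)) / (1+S) := by
    field_simp
    ring
  have h2 : 4/7*u*(1+S) ≤ S := by
    have hSval : S = (z*D2 + z^2) / (D1*D2) := by
      rw [hS]; field_simp
    rw [hSval, ← sub_nonneg]
    have hD12 : 0 < D1 * D2 := mul_pos hD1p hD2p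
    have hid : (z*D2 + z^2) / (D1*D2) - 4/7*u*(1 + (z*D2 + z^2) / (D1*D2))
        = ((7-4*u)*(z*D2 + z^2) - 4*u*(D1*D2)) / (7*(D1*D2)) := by
      field_simp
      try ring
    rw [hid]
    apply div_nonneg _ (by positivity)
    have hD1v : D1 = (4*u+3*z)/(4*u) := by rw [hD1]; field_simp; try ring
    have hD2v : D2 = (8*u+3*z)/(4*u) := by rw [hD2]; field_simp; try ring
    rw [hD1v, hD2v]
    rw [← sub_nonneg] at key ⊢
    have hu2 : (0:ℝ) < u^2 := by positivity
    rw [div_mul_div_comm]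
    rw [show (4*u)*(4*u) = 16*u^2 by ring]
    have expand : (7-4*u)*(z*((8*u+3*z)/(4*u)) + z^2) - 4*u*((4*u+3*z)*(8*u+3*z)/(16*u^2))
        = ((7-4*u)*(8*z*u + 3*z^2 + 4*z^2*u) - (4*u+3*z)*(8*u+3*z)) / (4*u) := by
      field_simp
      ring
    rw [expand, sub_zero]
    exact div_nonneg key (by positivity)
  rw [hrw]
  apply div_nonneg _ hT.le
  linarith [h2]
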